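/- If q₁ and q₂ are distinct primes, both congruent to 3 modulo 4, then Γ(ℤ_{q₁q₂}[i]) is isomorphic to the complete bipartite graph K_{q₁²−1, q₂²−1}, and hence is neither pancyclic nor bipancyclic. -/

import Mathlib

open SimpleGraph

/-- The set of nonzero zero-divisors of a commutative ring. -/
def zdVertex (R : Type*) [CommRing R] : Set R :=
  {x | x ≠ 0 ∧ ∃ y, y ≠ 0 ∧ x * y = 0}

/-- The zero-divisor graph `Γ(R)` of a commutative ring: vertices are the nonzero
zero-divisors, and distinct vertices are adjacent iff their product is zero. -/
def zdGraph (R : Type*) [CommRing R] : SimpleGraph (zdVertex R) where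
  Adj x y := x ≠ y ∧ (x : R) * y = 0
  symm := ⟨fun x y ⟨h1, h2⟩ => ⟨h1.symm, by rwa [mul_comm]⟩⟩
  loopless := ⟨fun x ⟨h1, _⟩ => h1 rfl⟩

/-- The ring of Gaussian integers modulo `n`, i.e. `ℤ[i]/⟨n⟩`. -/
abbrev Zi (n : ℕ) : Type := GaussianInt ⧸ Ideal.span ({(n : GaussianInt)} : Set GaussianInt)

/-- `G` contains a cycle of length `n`. -/
def HasCycleLength {V : Type*} (G : SimpleGraph V) (n : ℕ) : Prop :=
  ∃ (a : V) (p : G.Walk a a), p.IsCycle ∧ p.length = n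

/-- A graph of order `≥ 3` is pancyclic if it contains cycles of every length
from `3` to its order. -/
def Pancyclic {V : Type*} (G : SimpleGraph V) : Prop :=
  3 ≤ Nat.card V ∧ ∀ k, 3 ≤ k → k ≤ Nat.card V → HasCycleLength G k

/-- A graph is bipancyclic if it contains cycles of every even length from `4`
to its order. -/
def Bipancyclic {V : Type*} (G : SimpleGraph V) : Prop :=
  4 ≤ Nat.card V ∧ ∀ k, Even k → 4 ≤ k → k ≤ Nat.card V → HasCycleLength G k

/-- A graph is Hamiltonian if it contains a cycle passing through every vertex. -/
def IsHamiltonianGraph {V : Type*} (G : SimpleGraph V) : Prop :=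
  ∃ (a : V) (p : G.Walk a a), p.IsCycle ∧ ∀ v, v ∈ p.support


set_option linter.unnecessarySeqFocus false

section bip
variable {α β : Type*}

def bside : α ⊕ β → ZMod 2 := Sum.elim (fun _ => 0) (fun _ => 1)

lemma bside_adj {x y : α ⊕ β} (h : (completeBipartiteGraph α β).Adj x y) :
    bside y = bside x + 1 := by
  rcases x with a | b <;> rcases y with c | d <;> simp_all [completeBipartiteGraph, bside] <;> decide

lemma zmod2_key : ∀ a b : ZMod 2, (a = b) ↔ ¬ (a = b + 1) := by decide

lemma bside_count {u v : α ⊕ β} (p : (completeBipartiteGraph α β).Walk u v) :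
    p.support.countP (fun x => bside x = bside u) = p.length / 2 + 1 ∧
    p.support.countP (fun x => bside x ≠ bside u) = (p.length + 1) / 2 := by
  induction p with
  | nil => constructor <;> simp [Walk.support_nil, List.countP_cons]
  | @cons u w v h q ih =>
    have hw : bside w = bside u + 1 := bside_adj h
    have key : ∀ x : α ⊕ β, (decide (bside x = bside u)) = (decide ¬(bside x = bside w)) := by
      intro x; rw [hw]
      rcases zmod2_key (bside x) (bside u) with e
      by_cases hx : bside x = bside u <;> simp_all
    have key2 : ∀ x : α ⊕ β, (decide ¬(bside x = bside u)) = decide (bside x = bside w) := by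
      intro x; have := key x; by_cases hx : bside x = bside w <;> simp_all
    have huw : ¬ (bside u = bside u + 1) := by rw [← zmod2_key]
    rw [Walk.support_cons]
    have e1 : q.support.countP (fun x => decide (bside x = bside u)) =
        q.support.countP (fun x => decide ¬(bside x = bside w)) :=
      List.countP_congr (fun x _ => by rw [key x])
    have e2 : q.support.countP (fun x => decide ¬(bside x = bside u)) =
        q.support.countP (fun x => decide (bside x = bside w)) :=
      List.countP_congr (fun x _ => by rw [key2 x])
    constructor
    · rw [List.countP_cons]
      simp only [Walk.length_cons, decide_eq_true_eq]
      rw [e1]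
      have := ih.2
      simp only [ne_eq] at this
      rw [this]
      simp
    · rw [List.countP_cons]
      simp only [Walk.length_cons, ne_eq, decide_not]
      have e2' : q.support.countP (fun x => !decide (bside x = bside u)) =
          q.support.countP (fun x => decide (bside x = bside w)) := by
        rw [← e2]; exact List.countP_congr (fun x _ => by simp)
      rw [e2', ih.1]
      simp
      omega


lemma bside_walk {u v : α ⊕ β} (p : (completeBipartiteGraph α β).Walk u v) :
    bside v = bside u + (p.length : ZMod 2) := by
  induction p with
  | nil => simp
  | cons h q ih =>
    rw [ih, bside_adj h]
    push_cast [Walk.length_cons]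
    ring

lemma bside_cycle_even {a : α ⊕ β} (p : (completeBipartiteGraph α β).Walk a a) :
    (2 : ℕ) ∣ p.length := by
  have h := (bside_walk p).symm
  rw [add_eq_left] at h
  exact (ZMod.natCast_eq_zero_iff _ _).mp h

lemma no_three_cycle : ¬ HasCycleLength (completeBipartiteGraph α β) 3 := by
  rintro ⟨a, p, -, hl⟩
  have := bside_cycle_even p
  omega

lemma bside_eq_zero_iff (x : α ⊕ β) : bside x = 0 ↔ x.isLeft := by
  rcases x with a | b <;> simp [bside]

lemma bside_eq_one_iff (x : α ⊕ β) : bside x = 1 ↔ x.isRight := by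
  rcases x with a | b <;> simp [bside]

lemma bside_zero_or_one (x : α ⊕ β) : bside x = 0 ∨ bside x = 1 := by
  rcases x with a | b <;> simp [bside]

lemma no_ham_cycle (m n : ℕ) (hmn : m ≠ n) :
    ¬ HasCycleLength (completeBipartiteGraph (Fin m) (Fin n)) (m + n) := by
  rintro ⟨a, p, hc, hl⟩
  have hnd : p.support.tail.Nodup := hc.support_nodup
  have hlen : p.support.tail.length = m + n := by
    have := p.length_support; simp_all [List.length_tail]
  -- every vertex occurs in the tail
  have hfull : p.support.tail.toFinset = Finset.univ := by
    apply Finset.eq_univ_of_card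
    rw [List.toFinset_card_of_nodup hnd, hlen]
    simp
  -- count of lefts in tail is m, rights is n
  have hcount : ∀ q : (Fin m ⊕ Fin n) → Bool,
      p.support.tail.countP q = (Finset.univ.filter (fun x => q x = true)).card := by
    intro q
    rw [List.countP_eq_length_filter, ← List.toFinset_card_of_nodup (hnd.filter q),
      List.toFinset_filter, hfull]
  have etl : {x : Fin m ⊕ Fin n // x.isLeft = true} ≃ Fin m :=
    ⟨fun x => x.1.getLeft x.2, fun a => ⟨.inl a, rfl⟩,
      fun x => by rcases x with ⟨a | b, h⟩ <;> simp_all, fun a => rfl⟩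
  have etr : {x : Fin m ⊕ Fin n // x.isRight = true} ≃ Fin n :=
    ⟨fun x => x.1.getRight x.2, fun b => ⟨.inr b, rfl⟩,
      fun x => by rcases x with ⟨a | b, h⟩ <;> simp_all, fun b => rfl⟩
  have hcL : p.support.tail.countP (fun x => decide (bside x = 0)) = m := by
    rw [hcount, ← Fintype.card_subtype]
    rw [Fintype.card_congr ((Equiv.subtypeEquivRight (fun x => by
      simp [bside_eq_zero_iff])).trans etl)]
    simp
  have hcR : p.support.tail.countP (fun x => decide (bside x = 1)) = n := by
    rw [hcount, ← Fintype.card_subtype]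
    rw [Fintype.card_congr ((Equiv.subtypeEquivRight (fun x => by
      simp [bside_eq_one_iff])).trans etr)]
    simp
  have hsupp : p.support = a :: p.support.tail := (p.support_eq_cons).trans (by rw [p.support_eq_cons])
  have hbc := bside_count p
  rcases bside_zero_or_one a with ha | ha
  · have c1 : p.support.countP (fun x => bside x = bside a) = m + 1 := by
      rw [hsupp, List.countP_cons]
      have h' : p.support.tail.countP (fun x => decide (bside x = bside a)) = m :=
        (List.countP_congr (fun x _ => by simp [ha])).trans hcL
      rw [h']; simp [ha]
    have c2 : p.support.countP (fun x => bside x ≠ bside a) = n := by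
      rw [hsupp, List.countP_cons]
      simp only [ne_eq]
      have h' : p.support.tail.countP (fun x => decide ¬(bside x = bside a)) = n :=
        (List.countP_congr (fun x _ => by
          rcases bside_zero_or_one x with hx | hx <;> simp [hx, ha])).trans hcR
      rw [h']; simp
    rw [hbc.1, hl] at c1
    rw [hbc.2, hl] at c2
    have hev := bside_cycle_even p
    rw [hl] at hev
    omega
  · have c1 : p.support.countP (fun x => bside x = bside a) = n + 1 := by
      rw [hsupp, List.countP_cons]
      have h' : p.support.tail.countP (fun x => decide (bside x = bside a)) = n :=
        (List.countP_congr (fun x _ => by simp [ha])).trans hcR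
      rw [h']; simp [ha]
    have c2 : p.support.countP (fun x => bside x ≠ bside a) = m := by
      rw [hsupp, List.countP_cons]
      simp only [ne_eq]
      have h' : p.support.tail.countP (fun x => decide ¬(bside x = bside a)) = m :=
        (List.countP_congr (fun x _ => by
          rcases bside_zero_or_one x with hx | hx <;> simp [hx, ha])).trans hcL
      rw [h']; simp
    rw [hbc.1, hl] at c1
    rw [hbc.2, hl] at c2
    have hev := bside_cycle_even p
    rw [hl] at hev
    omega

lemma hasCycleLength_of_iso {V W : Type*} {G : SimpleGraph V} {H : SimpleGraph W} (f : G ≃g H)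
    {n : ℕ} (h : HasCycleLength G n) : HasCycleLength H n := by
  obtain ⟨a, p, hc, hl⟩ := h
  exact ⟨f a, p.map f.toHom, hc.map f.toEquiv.injective, by simp [hl]⟩

section AuxAlg







-- cardinality of Zi q
noncomputable def ziEquiv (q : ℕ) (hq : 0 < q) : ZMod q × ZMod q ≃ Zi q := by
  haveI : NeZero q := ⟨hq.ne'⟩
  refine Equiv.ofBijective
    (fun ab => Ideal.Quotient.mk _ (⟨(ab.1.val : ℤ), (ab.2.val : ℤ)⟩ : GaussianInt)) ⟨?_, ?_⟩
  · rintro ⟨a, b⟩ ⟨a', b'⟩ h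
    simp only [Ideal.Quotient.eq, Ideal.mem_span_singleton] at h
    rw [show ((q : GaussianInt)) = ((q : ℤ) : GaussianInt) by push_cast; rfl] at h
    rw [Zsqrtd.intCast_dvd] at h
    obtain ⟨h1, h2⟩ := h
    simp only [Zsqrtd.re_sub, Zsqrtd.im_sub] at h1 h2
    have e1 : (a.val : ℤ) = a'.val := by
      have := Int.eq_zero_of_abs_lt_dvd h1 ?_
      · omega
      · have := a.val_lt; have := a'.val_lt
        rw [abs_lt]; omega
    have e2 : (b.val : ℤ) = b'.val := by
      have := Int.eq_zero_of_abs_lt_dvd h2 ?_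
      · omega
      · have := b.val_lt; have := b'.val_lt
        rw [abs_lt]; omega
    have : a = a' := by
      have : a.val = a'.val := by exact_mod_cast e1
      exact ZMod.val_injective q this
    have : b = b' := by
      have : b.val = b'.val := by exact_mod_cast e2
      exact ZMod.val_injective q this
    simp_all
  · intro z
    obtain ⟨w, rfl⟩ := Ideal.Quotient.mk_surjective z
    refine ⟨((w.re : ZMod q), (w.im : ZMod q)), ?_⟩
    simp only [Ideal.Quotient.eq, Ideal.mem_span_singleton]
    rw [show ((q : GaussianInt)) = ((q : ℤ) : GaussianInt) by push_cast; rfl,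
      Zsqrtd.intCast_dvd]
    constructor
    · simp only [Zsqrtd.re_sub]
      have : (((((w.re : ZMod q)).val : ℤ) - w.re : ℤ) : ZMod q) = 0 := by
        push_cast [ZMod.natCast_val, ZMod.intCast_cast]
        simp
      rwa [ZMod.intCast_zmod_eq_zero_iff_dvd] at this
    · simp only [Zsqrtd.im_sub]
      have : (((((w.im : ZMod q)).val : ℤ) - w.im : ℤ) : ZMod q) = 0 := by
        push_cast [ZMod.natCast_val, ZMod.intCast_cast]
        simp
      rwa [ZMod.intCast_zmod_eq_zero_iff_dvd] at this

lemma zi_card (q : ℕ) (hq : 0 < q) : Nat.card (Zi q) = q ^ 2 := by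
  haveI : NeZero q := ⟨hq.ne'⟩
  rw [← Nat.card_congr (ziEquiv q hq)]
  simp [Nat.card_eq_fintype_card, ZMod.card]
  ring

lemma zi_isDomain (q : ℕ) (hq : q.Prime) (h3 : q % 4 = 3) : IsDomain (Zi q) := by
  haveI : Fact q.Prime := ⟨hq⟩
  have hp : Prime (q : GaussianInt) :=
    (GaussianInt.prime_iff_mod_four_eq_three_of_nat_prime q).mpr h3
  haveI : (Ideal.span ({(q : GaussianInt)} : Set GaussianInt)).IsPrime :=
    (Ideal.span_singleton_prime hp.ne_zero).mpr hp
  exact Ideal.Quotient.isDomain _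

/-- transport of zero-divisor graphs along ring isomorphisms -/
def zdVertEquiv {R S : Type*} [CommRing R] [CommRing S] (e : R ≃+* S) :
    zdVertex R ≃ zdVertex S := by
  refine Equiv.subtypeEquiv e.toEquiv (fun x => ?_)
  show x ∈ zdVertex R ↔ e x ∈ zdVertex S
  constructor
  · rintro ⟨hx, y, hy, hxy⟩
    refine ⟨fun h => hx (e.map_eq_zero_iff.mp h), e y,
      fun h => hy (e.map_eq_zero_iff.mp h), ?_⟩
    rw [← map_mul, hxy, map_zero]
  · rintro ⟨hx, y, hy, hxy⟩
    refine ⟨fun h => hx (by rw [h, map_zero]), e.symm y,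
      fun h => hy (by rw [← e.apply_symm_apply y, h, map_zero]), ?_⟩
    apply e.injective
    rw [map_mul, e.apply_symm_apply, hxy, map_zero]

def zdIso {R S : Type*} [CommRing R] [CommRing S] (e : R ≃+* S) : zdGraph R ≃g zdGraph S where
  toEquiv := zdVertEquiv e
  map_rel_iff' := by
    rintro ⟨x, hx⟩ ⟨y, hy⟩
    constructor
    · rintro ⟨h1, h2⟩
      refine ⟨fun h => h1 (congrArg (zdVertEquiv e) h), ?_⟩
      have h2' : e x * e y = 0 := h2
      have h3 : e (x * y) = 0 := by rw [map_mul]; exact h2'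
      exact e.map_eq_zero_iff.mp h3
    · rintro ⟨h1, h2⟩
      refine ⟨fun h => h1 ((zdVertEquiv e).injective h), ?_⟩
      show e x * e y = 0
      rw [← map_mul]
      have h2' : x * y = 0 := h2
      rw [h2', map_zero]

lemma mem_zdVertex_prod {F₁ F₂ : Type*} [CommRing F₁] [CommRing F₂] [IsDomain F₁] [IsDomain F₂]
    (x : F₁ × F₂) : x ∈ zdVertex (F₁ × F₂) ↔ (x.1 ≠ 0 ∧ x.2 = 0) ∨ (x.1 = 0 ∧ x.2 ≠ 0) := by
  constructor
  · rintro ⟨hx, y, hy, hxy⟩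
    rw [Prod.ext_iff] at hxy
    simp only [Prod.fst_mul, Prod.snd_mul, Prod.fst_zero, Prod.snd_zero] at hxy
    by_cases h1 : x.1 = 0
    · refine Or.inr ⟨h1, fun h2 => hx (Prod.ext h1 h2)⟩
    · refine Or.inl ⟨h1, ?_⟩
      have hy1 : y.1 = 0 := by
        rcases mul_eq_zero.mp hxy.1 with h | h
        · exact absurd h h1
        · exact h
      by_cases h2 : x.2 = 0
      · exact h2
      · have hy2 : y.2 = 0 := by
          rcases mul_eq_zero.mp hxy.2 with h | h
          · exact absurd h h2
          · exact h
        exact absurd (Prod.ext hy1 hy2) hy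
  · rintro (⟨h1, h2⟩ | ⟨h1, h2⟩)
    · exact ⟨fun h => h1 (congrArg Prod.fst h), (0, 1),
        fun h => one_ne_zero (congrArg Prod.snd h), by ext <;> simp [h2]⟩
    · exact ⟨fun h => h2 (congrArg Prod.snd h), (1, 0),
        fun h => one_ne_zero (congrArg Prod.fst h), by ext <;> simp [h1]⟩

section prodIso
variable {F₁ F₂ : Type*} [CommRing F₁] [CommRing F₂] [IsDomain F₁] [IsDomain F₂]

open scoped Classical in
noncomputable def zdProdEquiv :
    zdVertex (F₁ × F₂) ≃ {a : F₁ // a ≠ 0} ⊕ {b : F₂ // b ≠ 0} where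
  toFun x :=
    if h : x.val.1 = 0 then
      Sum.inr ⟨x.val.2, ((mem_zdVertex_prod x.val).mp x.2).resolve_left (fun hc => hc.1 h) |>.2⟩
    else Sum.inl ⟨x.val.1, h⟩
  invFun := Sum.elim
    (fun a => ⟨(a.1, 0), (mem_zdVertex_prod _).mpr (Or.inl ⟨a.2, rfl⟩)⟩)
    (fun b => ⟨(0, b.1), (mem_zdVertex_prod _).mpr (Or.inr ⟨rfl, b.2⟩)⟩)
  left_inv := by
    rintro ⟨⟨x1, x2⟩, hx⟩
    rcases (mem_zdVertex_prod _).mp hx with ⟨h1, h2⟩ | ⟨h1, h2⟩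
    · beta_reduce
      rw [dif_neg h1]
      exact Subtype.ext (Prod.ext rfl h2.symm)
    · beta_reduce
      rw [dif_pos h1]
      exact Subtype.ext (Prod.ext h1.symm rfl)
  right_inv := by
    rintro (a | b)
    · simp [a.2]
    · simp
open scoped Classical in
lemma zdProdEquiv_inl (x : zdVertex (F₁ × F₂)) (h : x.val.1 ≠ 0) :
    zdProdEquiv x = Sum.inl ⟨x.val.1, h⟩ := by simp [zdProdEquiv, h]
open scoped Classical in
lemma zdProdEquiv_inr (x : zdVertex (F₁ × F₂)) (h : x.val.1 = 0) :
    (zdProdEquiv x).isRight := by simp [zdProdEquiv, h]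

noncomputable def zdProdIso :
    zdGraph (F₁ × F₂) ≃g completeBipartiteGraph {a : F₁ // a ≠ 0} {b : F₂ // b ≠ 0} where
  toEquiv := zdProdEquiv
  map_rel_iff' := by
    rintro ⟨⟨x1, x2⟩, hx⟩ ⟨⟨y1, y2⟩, hy⟩
    rcases (mem_zdVertex_prod _).mp hx with ⟨hx1, hx2⟩ | ⟨hx1, hx2⟩ <;>
      rcases (mem_zdVertex_prod _).mp hy with ⟨hy1, hy2⟩ | ⟨hy1, hy2⟩
    · -- both left: not adjacent on either side
      rw [zdProdEquiv_inl _ hx1, zdProdEquiv_inl _ hy1]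
      subst hx2 hy2
      simp only [completeBipartiteGraph]
      constructor
      · rintro (⟨-, h⟩ | ⟨h, -⟩) <;> simp_all
      · rintro ⟨-, h⟩
        rw [Prod.ext_iff] at h
        exact absurd ((mul_eq_zero.mp h.1).resolve_left hx1) hy1
    · rw [zdProdEquiv_inl _ hx1, show zdProdEquiv ⟨(y1,y2),hy⟩ = Sum.inr ⟨y2, hy2⟩ from by
        simp [zdProdEquiv, show y1 = 0 from hy1]]
      subst hx2 hy1
      simp only [completeBipartiteGraph]
      constructor
      · rintro -
        refine ⟨fun h => hx1 (by simpa using congrArg (Prod.fst ∘ Subtype.val) h), ?_⟩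
        show ((x1, (0:F₂)) : F₁ × F₂) * (0, y2) = 0
        ext <;> simp
      · rintro -
        simp
    · rw [show zdProdEquiv ⟨(x1,x2),hx⟩ = Sum.inr ⟨x2, hx2⟩ from by
        simp [zdProdEquiv, show x1 = 0 from hx1], zdProdEquiv_inl ⟨(y1,y2),hy⟩ hy1]
      subst hy2 hx1
      simp only [completeBipartiteGraph]
      constructor
      · rintro -
        refine ⟨fun h => hy1 (by simpa using congrArg (Prod.fst ∘ Subtype.val) h.symm), ?_⟩
        show (((0:F₁), x2) : F₁ × F₂) * (y1, 0) = 0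
        ext <;> simp
      · rintro -
        simp
    · rw [show zdProdEquiv ⟨(x1,x2),hx⟩ = Sum.inr ⟨x2, hx2⟩ from by simp [zdProdEquiv, show x1 = 0 from hx1],
        show zdProdEquiv ⟨(y1,y2),hy⟩ = Sum.inr ⟨y2, hy2⟩ from by simp [zdProdEquiv, show y1 = 0 from hy1]]
      subst hx1 hy1
      simp only [completeBipartiteGraph]
      constructor
      · rintro (⟨h, -⟩ | ⟨-, h⟩) <;> simp_all
      · rintro ⟨-, h⟩
        rw [Prod.ext_iff] at h
        exact absurd ((mul_eq_zero.mp h.2).resolve_left hx2) hy2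
end prodIso

def cbgCongr {α β γ δ : Type*} (e₁ : α ≃ γ) (e₂ : β ≃ δ) :
    completeBipartiteGraph α β ≃g completeBipartiteGraph γ δ where
  toEquiv := Equiv.sumCongr e₁ e₂
  map_rel_iff' := by rintro (a | b) (c | d) <;> simp [completeBipartiteGraph]

end AuxAlg

theorem stmt7 (q₁ q₂ : ℕ) (hq₁ : q₁.Prime) (hq₂ : q₂.Prime) (hne : q₁ ≠ q₂)
    (h₁ : q₁ % 4 = 3) (h₂ : q₂ % 4 = 3) :
    Nonempty (zdGraph (Zi (q₁ * q₂)) ≃g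
      completeBipartiteGraph (Fin (q₁ ^ 2 - 1)) (Fin (q₂ ^ 2 - 1))) ∧
    ¬ Pancyclic (zdGraph (Zi (q₁ * q₂))) ∧ ¬ Bipancyclic (zdGraph (Zi (q₁ * q₂))) := by
  haveI : Fact q₁.Prime := ⟨hq₁⟩
  haveI : Fact q₂.Prime := ⟨hq₂⟩
  have hodd₁ : Odd q₁ := hq₁.odd_of_ne_two (by omega)
  have hodd₂ : Odd q₂ := hq₂.odd_of_ne_two (by omega)
  have h3₁ : 3 ≤ q₁ := by omega
  have h3₂ : 3 ≤ q₂ := by omega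
  have hm9 : 9 ≤ q₁ ^ 2 := by nlinarith
  have hn9 : 9 ≤ q₂ ^ 2 := by nlinarith
  have hmn : q₁ ^ 2 - 1 ≠ q₂ ^ 2 - 1 := by
    intro h
    have : q₁ ^ 2 = q₂ ^ 2 := by omega
    exact hne (Nat.pow_left_injective (by norm_num) this)
  have hEm : Even (q₁ ^ 2 - 1) := Nat.Odd.sub_odd hodd₁.pow odd_one
  have hEn : Even (q₂ ^ 2 - 1) := Nat.Odd.sub_odd hodd₂.pow odd_one
  haveI : IsDomain (Zi q₁) := zi_isDomain q₁ hq₁ h₁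
  haveI : IsDomain (Zi q₂) := zi_isDomain q₂ hq₂ h₂
  haveI : Finite (Zi q₁) := Finite.of_equiv _ (ziEquiv q₁ hq₁.pos)
  haveI : Finite (Zi q₂) := Finite.of_equiv _ (ziEquiv q₂ hq₂.pos)
  have hc₁ : Nat.card {a : Zi q₁ // a ≠ 0} = q₁ ^ 2 - 1 := by
    classical
    haveI : Fintype (Zi q₁) := Fintype.ofEquiv _ (ziEquiv q₁ hq₁.pos)
    have h' : Nat.card {a : Zi q₁ // a ≠ 0} = Nat.card (Zi q₁) - 1 := by
      simp [Nat.card_eq_fintype_card, Fintype.card_subtype_compl]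
    rw [h', zi_card q₁ hq₁.pos]
  have hc₂ : Nat.card {a : Zi q₂ // a ≠ 0} = q₂ ^ 2 - 1 := by
    classical
    haveI : Fintype (Zi q₂) := Fintype.ofEquiv _ (ziEquiv q₂ hq₂.pos)
    have h' : Nat.card {a : Zi q₂ // a ≠ 0} = Nat.card (Zi q₂) - 1 := by
      simp [Nat.card_eq_fintype_card, Fintype.card_subtype_compl]
    rw [h', zi_card q₂ hq₂.pos]
  have e₁ : {a : Zi q₁ // a ≠ 0} ≃ Fin (q₁ ^ 2 - 1) := Finite.equivFinOfCardEq hc₁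
  have e₂ : {a : Zi q₂ // a ≠ 0} ≃ Fin (q₂ ^ 2 - 1) := Finite.equivFinOfCardEq hc₂
  have hco : IsCoprime ((q₁ : GaussianInt)) ((q₂ : GaussianInt)) := by
    have hz : IsCoprime (q₁ : ℤ) (q₂ : ℤ) := by
      rw [Int.isCoprime_iff_gcd_eq_one]
      simpa using (Nat.coprime_primes hq₁ hq₂).mpr hne
    have := hz.map (Int.castRingHom GaussianInt)
    simpa using this
  have hspan : Ideal.span ({((q₁ * q₂ : ℕ) : GaussianInt)} : Set GaussianInt)
      = Ideal.span {(q₁ : GaussianInt)} * Ideal.span {(q₂ : GaussianInt)} := by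
    rw [Ideal.span_singleton_mul_span_singleton]
    norm_cast
  let re : Zi (q₁ * q₂) ≃+* Zi q₁ × Zi q₂ :=
    (Ideal.quotEquivOfEq hspan).trans
      (Ideal.quotientMulEquivQuotientProd _ _
        ((Ideal.isCoprime_span_singleton_iff _ _).mpr hco))
  let Φ : zdGraph (Zi (q₁ * q₂)) ≃g completeBipartiteGraph (Fin (q₁ ^ 2 - 1)) (Fin (q₂ ^ 2 - 1)) :=
    (zdIso re).trans (zdProdIso.trans (cbgCongr e₁ e₂))
  refine ⟨⟨Φ⟩, ?_, ?_⟩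
  · rintro ⟨hcard3, h⟩
    exact no_three_cycle (hasCycleLength_of_iso Φ (h 3 le_rfl hcard3))
  · rintro ⟨hcard4, h⟩
    have hcV : Nat.card (zdVertex (Zi (q₁ * q₂))) = (q₁ ^ 2 - 1) + (q₂ ^ 2 - 1) := by
      rw [Nat.card_congr Φ.toEquiv, Nat.card_sum]
      simp
    have hk := h ((q₁ ^ 2 - 1) + (q₂ ^ 2 - 1)) (hEm.add hEn) (by omega) (le_of_eq hcV.symm)
    exact no_ham_cycle _ _ hmn (hasCycleLength_of_iso Φ hk)
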